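/- One-dimensional resolvent approximation: let l ∈ ℝ, ω ≥ 0, λ ∈ ℝ with λ > ω and l ≤ ω. Suppose s : [0,∞) → ℝ is continuous with 0 ≤ s(t) ≤ e^{ωt} for all t ≥ 0 and s(t) = 1 + t·l + o(t) as t → 0⁺. Then lim_{n→∞} ∫₀^∞ e^{-λt} s(t/n)^n dt = ∫₀^∞ e^{-λt} e^{tl} dt = 1/(λ − l). -/

import Mathlib

open MeasureTheory Filter Topology Set

/-- one-dimensional resolvent approximation. -/
theorem stmt_6
    (l ω lam : ℝ) (hω : 0 ≤ ω) (hlam : ω < lam) (hl : l ≤ ω)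
    (s : ℝ → ℝ) (hscont : ContinuousOn s (Ici (0 : ℝ)))
    (hsbound : ∀ t : ℝ, 0 ≤ t → 0 ≤ s t ∧ s t ≤ Real.exp (ω * t))
    (hderiv : Tendsto (fun t : ℝ => (s t - 1 - t * l) / t) (𝓝[>] (0 : ℝ)) (𝓝 0)) :
    Tendsto
      (fun n : ℕ => ∫ t in Ioi (0 : ℝ), Real.exp (-lam * t) * (s (t / n)) ^ n)
      atTop (𝓝 (∫ t in Ioi (0 : ℝ), Real.exp (-lam * t) * Real.exp (t * l))) ∧
    (∫ t in Ioi (0 : ℝ), Real.exp (-lam * t) * Real.exp (t * l)) = 1 / (lam - l) := by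
  -- Step A: (s u - 1)/u → l as u → 0⁺
  have hA : Tendsto (fun u : ℝ => (s u - 1) / u) (𝓝[>] (0 : ℝ)) (𝓝 l) := by
    have := hderiv.add (tendsto_const_nhds (x := l))
    rw [zero_add] at this
    refine this.congr' ?_
    filter_upwards [self_mem_nhdsWithin] with u (hu : 0 < u)
    field_simp
    ring
  -- Step B: s u → 1 as u → 0⁺
  have hB : Tendsto s (𝓝[>] (0 : ℝ)) (𝓝 1) := by
    have h0 : Tendsto (fun u : ℝ => u) (𝓝[>] (0 : ℝ)) (𝓝 0) :=
      tendsto_id.mono_left nhdsWithin_le_nhds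
    have := (hA.mul h0).add (tendsto_const_nhds (x := (1:ℝ)))
    rw [mul_zero, zero_add] at this
    refine this.congr' ?_
    filter_upwards [self_mem_nhdsWithin] with u (hu : 0 < u)
    field_simp
    ring
  -- eventually s u > 0
  have hpos : ∀ᶠ u in 𝓝[>] (0 : ℝ), 0 < s u := hB (Ioi_mem_nhds zero_lt_one)
  -- Step C: log (s u) / u → l as u → 0⁺
  have hC : Tendsto (fun u : ℝ => Real.log (s u) / u) (𝓝[>] (0 : ℝ)) (𝓝 l) := by
    have hlow : Tendsto (fun u : ℝ => ((s u - 1) / u) * (s u)⁻¹) (𝓝[>] (0 : ℝ))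
        (𝓝 (l * 1⁻¹)) := hA.mul (hB.inv₀ one_ne_zero)
    rw [inv_one, mul_one] at hlow
    refine tendsto_of_tendsto_of_tendsto_of_le_of_le' hlow hA ?_ ?_
    · filter_upwards [self_mem_nhdsWithin, hpos] with u (hu : 0 < u) hsu
      have h1 : 1 - (s u)⁻¹ ≤ Real.log (s u) := by
        have := Real.add_one_le_exp (-Real.log (s u))
        rw [Real.exp_neg, Real.exp_log hsu] at this
        linarith
      have heq : ((s u - 1) / u) * (s u)⁻¹ = (1 - (s u)⁻¹) / u := by
        rw [div_mul_eq_mul_div]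
        congr 1
        field_simp
      rw [heq]
      exact div_le_div_of_nonneg_right h1 hu.le
    · filter_upwards [self_mem_nhdsWithin, hpos] with u (hu : 0 < u) hsu
      have h1 : Real.log (s u) ≤ s u - 1 := Real.log_le_sub_one_of_pos hsu
      exact div_le_div_of_nonneg_right h1 hu.le
  -- Step D: pointwise convergence for each t > 0
  have hD : ∀ t : ℝ, 0 < t →
      Tendsto (fun n : ℕ => (s (t / n)) ^ n) atTop (𝓝 (Real.exp (t * l))) := by
    intro t ht
    have hu : Tendsto (fun n : ℕ => t / (n : ℝ)) atTop (𝓝[>] (0 : ℝ)) := by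
      rw [tendsto_nhdsWithin_iff]
      constructor
      · exact tendsto_const_nhds.div_atTop tendsto_natCast_atTop_atTop
      · filter_upwards [eventually_gt_atTop 0] with n hn
        exact div_pos ht (by positivity)
    have hlog : Tendsto (fun n : ℕ => (n : ℝ) * Real.log (s (t / n))) atTop
        (𝓝 (t * l)) := by
      have := (hC.comp hu).const_mul t
      rw [mul_comm t l] at this
      rw [show l * t = t * l by ring] at this
      refine this.congr' ?_
      filter_upwards [eventually_gt_atTop 0] with n hn
      have hn' : (n : ℝ) ≠ 0 := by positivity
      simp only [Function.comp]
      field_simp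
    have hexp := (Real.continuous_exp.tendsto (t * l)).comp hlog
    refine hexp.congr' ?_
    filter_upwards [hu.eventually hpos] with n hn
    simp only [Function.comp_apply]
    rw [Real.exp_nat_mul, Real.exp_log hn]
  -- integrability of the dominating function
  have hb : (0:ℝ) < lam - ω := by linarith
  have hbound_int : IntegrableOn (fun t : ℝ => Real.exp (-(lam - ω) * t)) (Ioi (0:ℝ)) :=
    exp_neg_integrableOn_Ioi 0 hb
  constructor
  · -- dominated convergence
    refine tendsto_integral_of_dominated_convergence
      (fun t => Real.exp (-(lam - ω) * t)) ?_ hbound_int ?_ ?_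
    · intro n
      refine ContinuousOn.aestronglyMeasurable ?_ measurableSet_Ioi
      refine (Real.continuous_exp.comp (continuous_const.mul continuous_id)).continuousOn.mul
        (ContinuousOn.pow ?_ n)
      refine hscont.comp (continuous_id.div_const (n : ℝ)).continuousOn ?_
      intro x hx
      exact div_nonneg (le_of_lt (show (0:ℝ) < x from hx)) (Nat.cast_nonneg (α := ℝ) n)
    · intro n
      rw [ae_restrict_iff' measurableSet_Ioi]
      refine ae_of_all _ fun t ht => ?_
      have ht' : (0:ℝ) < t := ht
      have h1 : 0 ≤ t / (n : ℝ) := div_nonneg ht'.le (Nat.cast_nonneg n)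
      obtain ⟨hs0, hs1⟩ := hsbound (t / n) h1
      have key : (s (t / n)) ^ n ≤ Real.exp (ω * t) := by
        rcases Nat.eq_zero_or_pos n with hn | hn
        · subst hn; simp [Real.one_le_exp_iff]; positivity
        · calc (s (t / n)) ^ n ≤ (Real.exp (ω * (t / n))) ^ n :=
                pow_le_pow_left₀ hs0 hs1 n
            _ = Real.exp (ω * (t / n) * n) := by rw [← Real.exp_nat_mul]; ring_nf
            _ = Real.exp (ω * t) := by
                congr 1
                field_simp
      have : ‖Real.exp (-lam * t) * (s (t / n)) ^ n‖
          = Real.exp (-lam * t) * (s (t / n)) ^ n := by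
        rw [Real.norm_eq_abs, abs_of_nonneg]
        positivity
      rw [this]
      calc Real.exp (-lam * t) * (s (t / n)) ^ n
          ≤ Real.exp (-lam * t) * Real.exp (ω * t) := by
            exact mul_le_mul_of_nonneg_left key (Real.exp_pos _).le
        _ = Real.exp (-(lam - ω) * t) := by rw [← Real.exp_add]; ring_nf
    · rw [ae_restrict_iff' measurableSet_Ioi]
      refine ae_of_all _ fun t ht => ?_
      exact tendsto_const_nhds.mul (hD t ht)
  · -- value of the integral
    have hb' : (0:ℝ) < lam - l := by linarith
    have heq : ∀ t : ℝ, Real.exp (-lam * t) * Real.exp (t * l)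
        = Real.exp (-((lam - l) * t)) := by
      intro t; rw [← Real.exp_add]; ring_nf
    calc (∫ t in Ioi (0:ℝ), Real.exp (-lam * t) * Real.exp (t * l))
        = ∫ t in Ioi (0:ℝ), Real.exp (-((lam - l) * t)) := by
          refine setIntegral_congr_fun measurableSet_Ioi fun t _ => heq t
      _ = (lam - l)⁻¹ • ∫ x in Ioi ((lam - l) * 0), Real.exp (-x) :=
          integral_comp_mul_left_Ioi (fun x => Real.exp (-x)) 0 hb'
      _ = 1 / (lam - l) := by
          rw [mul_zero, integral_exp_neg_Ioi_zero, smul_eq_mul, mul_one, one_div]
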